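/- Let H₀ ∈ ℂ^{n×n}, F₀ = e^{H₀}, and R₀ = F₀ − Σ_{s=0}^{M}H₀^s/s! be the Taylor remainder. Then F₀⁻¹R₀ = Σ_{i=0}^{∞} H₀^{M+1+i} (−1)^i / (i! · M! · (i+M+1)), and hence ‖F₀⁻¹R₀‖ ≤ (1/M!) Σ_{i=0}^{∞} ‖H₀‖^{M+1+i} / (i!(i+M+1)). -/

import Mathlib

attribute [local instance] Matrix.linftyOpNormedRing Matrix.linftyOpNormedAlgebra

private lemma alt_sum (N i : ℕ) :
    ∑ j ∈ Finset.range (i + 1), (-1 : ℂ) ^ j * ((N + 1).choose j : ℂ)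
      = (-1) ^ i * (N.choose i : ℂ) := by
  induction i with
  | zero => simp
  | succ i ih =>
      rw [Finset.sum_range_succ, ih, Nat.choose_succ_succ]
      push_cast
      ring

private lemma coeff_sum (M i : ℕ) :
    (∑ j ∈ Finset.range (i + 1),
        (-1 : ℂ) ^ j / ((j.factorial : ℂ) * ((M + 1 + (i - j)).factorial : ℂ)))
      = (-1 : ℂ) ^ i / ((i.factorial : ℂ) * (M.factorial : ℂ) * ((i : ℂ) + M + 1)) := by
  have h1 : ∀ j ∈ Finset.range (i + 1),
      (-1 : ℂ) ^ j / ((j.factorial : ℂ) * ((M + 1 + (i - j)).factorial : ℂ))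
        = ((-1 : ℂ) ^ j * ((M + 1 + i).choose j : ℂ)) / ((M + 1 + i).factorial : ℂ) := by
    intro j hj
    have hj' : j ≤ i := by simpa [Nat.lt_succ_iff] using Finset.mem_range.mp hj
    have h := Nat.choose_mul_factorial_mul_factorial (show j ≤ M + 1 + i by omega)
    rw [show M + 1 + i - j = M + 1 + (i - j) by omega] at h
    have hc : ((M + 1 + i).choose j : ℂ) * (j.factorial : ℂ)
        * ((M + 1 + (i - j)).factorial : ℂ) = ((M + 1 + i).factorial : ℂ) := by
      exact_mod_cast congrArg (Nat.cast : ℕ → ℂ) h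
    have h2 : (j.factorial : ℂ) ≠ 0 := Nat.cast_ne_zero.mpr (Nat.factorial_ne_zero _)
    have h3 : ((M + 1 + (i - j)).factorial : ℂ) ≠ 0 :=
      Nat.cast_ne_zero.mpr (Nat.factorial_ne_zero _)
    have h4 : ((M + 1 + i).factorial : ℂ) ≠ 0 :=
      Nat.cast_ne_zero.mpr (Nat.factorial_ne_zero _)
    rw [div_eq_div_iff (mul_ne_zero h2 h3) h4]
    linear_combination (-(-1 : ℂ) ^ j) * hc
  rw [Finset.sum_congr rfl h1, ← Finset.sum_div,
    show M + 1 + i = (M + i) + 1 by omega, alt_sum (M + i) i]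
  have h := Nat.choose_mul_factorial_mul_factorial (Nat.le_add_left i M)
  rw [Nat.add_sub_cancel] at h
  have hc : ((M + i).choose i : ℂ) * (i.factorial : ℂ) * (M.factorial : ℂ)
      = ((M + i).factorial : ℂ) := by
    exact_mod_cast congrArg (Nat.cast : ℕ → ℂ) h
  have h4 : ((M + i + 1).factorial : ℂ) = ((M : ℂ) + i + 1) * ((M + i).factorial : ℂ) := by
    rw [Nat.factorial_succ]; push_cast; ring
  have h2 : (i.factorial : ℂ) ≠ 0 := Nat.cast_ne_zero.mpr (Nat.factorial_ne_zero _)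
  have h3 : (M.factorial : ℂ) ≠ 0 := Nat.cast_ne_zero.mpr (Nat.factorial_ne_zero _)
  have h5 : ((M + i).factorial : ℂ) ≠ 0 := Nat.cast_ne_zero.mpr (Nat.factorial_ne_zero _)
  have h6 : ((M : ℂ) + i + 1) ≠ 0 := by
    have : (0 : ℝ) < (M : ℝ) + i + 1 := by positivity
    intro hcon
    have := congrArg Complex.re hcon
    simp at this
    norm_cast at this
  rw [h4, div_eq_div_iff (mul_ne_zero h6 h5) (by
    refine mul_ne_zero (mul_ne_zero h2 h3) ?_
    intro hcon
    apply h6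
    linear_combination hcon)]
  linear_combination ((-1 : ℂ) ^ i * ((M : ℂ) + i + 1)) * hc

open NormedSpace in
/-- Taylor remainder of the matrix exponential: with `F₀ = e^{H₀}` and
`R₀ = F₀ - Σ_{s=0}^M H₀^s/s!`,
`F₀⁻¹R₀ = Σ_{i=0}^∞ (-1)^i/(i!·M!·(i+M+1)) H₀^{M+1+i}`, and hence
`‖F₀⁻¹R₀‖ ≤ (1/M!) Σ_{i=0}^∞ ‖H₀‖^{M+1+i}/(i!(i+M+1))`. -/
theorem exp_taylor_remainder {n : ℕ} [DecidableEq (Fin n)]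
    (H₀ : Matrix (Fin n) (Fin n) ℂ) (M : ℕ)
    (F₀ R₀ : Matrix (Fin n) (Fin n) ℂ)
    (hF : F₀ = exp H₀)
    (hR : R₀ = F₀ - ∑ s ∈ Finset.range (M + 1), (s.factorial : ℂ)⁻¹ • H₀ ^ s) :
    F₀⁻¹ * R₀ =
      ∑' i : ℕ, ((-1 : ℂ) ^ i / (i.factorial * M.factorial * (i + M + 1))) •
        H₀ ^ (M + 1 + i) ∧
    ‖F₀⁻¹ * R₀‖ ≤
      (1 / (M.factorial : ℝ)) *
        ∑' i : ℕ, ‖H₀‖ ^ (M + 1 + i) / (i.factorial * (i + M + 1)) := by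
  classical
  set f : ℕ → Matrix (Fin n) (Fin n) ℂ := fun s => (s.factorial : ℂ)⁻¹ • H₀ ^ s with hf
  set a : ℕ → Matrix (Fin n) (Fin n) ℂ := fun j => (j.factorial : ℂ)⁻¹ • (-H₀) ^ j with ha
  set b : ℕ → Matrix (Fin n) (Fin n) ℂ :=
    fun k => ((M + 1 + k).factorial : ℂ)⁻¹ • H₀ ^ (M + 1 + k) with hb
  have hFinv : F₀⁻¹ = ∑' j, a j := by
    rw [hF, ← Matrix.exp_neg, exp_eq_tsum (𝕂 := ℂ)]
  have hsumf : Summable f := expSeries_summable' (𝕂 := ℂ) H₀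
  have hR' : R₀ = ∑' k, b k := by
    have h := Summable.sum_add_tsum_nat_add (M + 1) hsumf
    have hbb : ∑' (k : ℕ), f (k + (M + 1)) = ∑' k, b k := by
      refine tsum_congr fun k => ?_
      simp only [hf, hb, show k + (M + 1) = M + 1 + k by omega]
    rw [hR, hF, exp_eq_tsum (𝕂 := ℂ)]
    show (∑' i, f i) - ∑ s ∈ Finset.range (M + 1), f s = ∑' k, b k
    rw [← hbb, ← h]
    abel
  have hna : Summable fun j => ‖a j‖ := norm_expSeries_summable' (𝕂 := ℂ) (-H₀)
  have hnb : Summable fun k => ‖b k‖ := by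
    have h := (summable_nat_add_iff (M + 1)).2 (norm_expSeries_summable' (𝕂 := ℂ) H₀)
    refine h.congr fun k => ?_
    simp only [hb, show k + (M + 1) = M + 1 + k by omega]
  have key : ∀ i : ℕ, ∑ kl ∈ Finset.HasAntidiagonal.antidiagonal i, a kl.1 * b kl.2
      = ((-1 : ℂ) ^ i / ((i.factorial : ℂ) * M.factorial * ((i : ℂ) + M + 1))) •
        H₀ ^ (M + 1 + i) := by
    intro i
    rw [Finset.Nat.sum_antidiagonal_eq_sum_range_succ_mk]
    have hterm : ∀ j ∈ Finset.range (i + 1), a j * b (i - j)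
        = ((-1 : ℂ) ^ j / ((j.factorial : ℂ) * ((M + 1 + (i - j)).factorial : ℂ))) •
          H₀ ^ (M + 1 + i) := by
      intro j hj
      have hj' : j ≤ i := by simpa [Nat.lt_succ_iff] using Finset.mem_range.mp hj
      simp only [ha, hb]
      rw [show (-H₀) = (-1 : ℂ) • H₀ by simp, smul_pow, smul_smul, smul_mul_assoc,
        mul_smul_comm, smul_smul, ← pow_add, show j + (M + 1 + (i - j)) = M + 1 + i by omega]
      congr 1
      field_simp
    rw [Finset.sum_congr rfl hterm, ← Finset.sum_smul, coeff_sum M i]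
  have heq : F₀⁻¹ * R₀ =
      ∑' i : ℕ, ((-1 : ℂ) ^ i / (i.factorial * M.factorial * ((i : ℂ) + M + 1))) •
        H₀ ^ (M + 1 + i) := by
    rw [hFinv, hR']
    exact (tsum_mul_tsum_eq_tsum_sum_antidiagonal_of_summable_norm hna hnb).trans (tsum_congr key)
  refine ⟨heq, ?_⟩
  -- norm bound
  set c : ℕ → ℂ := fun i => (-1 : ℂ) ^ i / (i.factorial * M.factorial * ((i : ℂ) + M + 1))
    with hc
  have hcnorm : ∀ i : ℕ, ‖c i‖ = 1 / ((i.factorial : ℝ) * M.factorial * ((i : ℝ) + M + 1)) := by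
    intro i
    have hcast : ((i.factorial : ℂ) * M.factorial * ((i : ℂ) + M + 1))
        = ((i.factorial * M.factorial * (i + M + 1) : ℕ) : ℂ) := by push_cast; ring
    simp only [hc, norm_div, norm_pow, norm_neg, norm_one, one_pow, hcast,
      Complex.norm_natCast]
    push_cast
    ring
  have hbound : ∀ i : ℕ, ‖c i • H₀ ^ (M + 1 + i)‖ ≤
      (1 / (M.factorial : ℝ)) * (‖H₀‖ ^ (M + 1 + i) / ((i.factorial : ℝ) * ((i : ℝ) + M + 1))) := by
    intro i
    rw [norm_smul, hcnorm]
    have h1 : ‖H₀ ^ (M + 1 + i)‖ ≤ ‖H₀‖ ^ (M + 1 + i) := norm_pow_le' _ (by omega)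
    have h2 : (0 : ℝ) < (i.factorial : ℝ) * M.factorial * ((i : ℝ) + M + 1) := by positivity
    calc 1 / ((i.factorial : ℝ) * M.factorial * ((i : ℝ) + M + 1)) * ‖H₀ ^ (M + 1 + i)‖
        ≤ 1 / ((i.factorial : ℝ) * M.factorial * ((i : ℝ) + M + 1)) * ‖H₀‖ ^ (M + 1 + i) :=
          mul_le_mul_of_nonneg_left h1 (by positivity)
      _ = (1 / (M.factorial : ℝ)) *
            (‖H₀‖ ^ (M + 1 + i) / ((i.factorial : ℝ) * ((i : ℝ) + M + 1))) := by
          rw [show (1:ℝ) / ((i.factorial : ℝ) * M.factorial * ((i : ℝ) + M + 1))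
              = (1 / (M.factorial : ℝ)) * (1 / ((i.factorial : ℝ) * ((i : ℝ) + M + 1))) by
            rw [div_mul_div_comm, one_mul]; congr 1; ring]
          ring
  have hmaj : Summable fun i : ℕ =>
      (1 / (M.factorial : ℝ)) * (‖H₀‖ ^ (M + 1 + i) / ((i.factorial : ℝ) * ((i : ℝ) + M + 1))) := by
    apply Summable.mul_left
    have hs : Summable fun i : ℕ => ‖H₀‖ ^ (M + 1) * (‖H₀‖ ^ i / (i.factorial : ℝ)) :=
      (Real.summable_pow_div_factorial ‖H₀‖).mul_left _
    refine hs.of_nonneg_of_le (fun i => by positivity) fun i => ?_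
    have h1 : (1 : ℝ) ≤ (i : ℝ) + M + 1 := by
      have : (0:ℝ) ≤ (i:ℝ) + M := by positivity
      linarith
    have h0 : (0:ℝ) < (i.factorial : ℝ) := by positivity
    have he : ‖H₀‖ ^ (M + 1) * (‖H₀‖ ^ i / (i.factorial : ℝ)) *
        ((i.factorial : ℝ) * ((i : ℝ) + M + 1))
        = ‖H₀‖ ^ (M + 1) * ‖H₀‖ ^ i * ((i : ℝ) + M + 1) := by
      field_simp
    rw [pow_add, div_le_iff₀ (by positivity), he]
    nlinarith [mul_nonneg (mul_nonneg (pow_nonneg (norm_nonneg H₀) (M + 1))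
      (pow_nonneg (norm_nonneg H₀) i)) (sub_nonneg.2 h1)]
  have hnsum : Summable fun i : ℕ => ‖c i • H₀ ^ (M + 1 + i)‖ :=
    hmaj.of_nonneg_of_le (fun i => norm_nonneg _) hbound
  calc ‖F₀⁻¹ * R₀‖ = ‖∑' i, c i • H₀ ^ (M + 1 + i)‖ := by rw [heq]
    _ ≤ ∑' i, ‖c i • H₀ ^ (M + 1 + i)‖ := norm_tsum_le_tsum_norm hnsum
    _ ≤ ∑' i, (1 / (M.factorial : ℝ)) *
          (‖H₀‖ ^ (M + 1 + i) / ((i.factorial : ℝ) * ((i : ℝ) + M + 1))) :=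
        Summable.tsum_le_tsum hbound hnsum hmaj
    _ = (1 / (M.factorial : ℝ)) *
          ∑' i : ℕ, ‖H₀‖ ^ (M + 1 + i) / ((i.factorial : ℝ) * ((i : ℝ) + M + 1)) :=
        tsum_mul_left
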